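/- Let f : F → C be a classifier on a finite product input space F = X_1 × ⋯ × X_n, let D be an arbitrary distribution on F, let S ⊆ {1,…,n}, and let t ∉ S. Then v^g_suff(S ∪ {t}) − v^g_suff(S) = Σ_{a} Pr(z_S = a) · Σ_{j ∈ C} Σ_{{v,w}} P_v(a) · P_w(a) · ( g_v^j(a) − g_w^j(a) )² ≥ 0, where the outer sum ranges over tuples a of values for S with Pr(z_S = a) > 0, the inner sum ranges over unordered pairs {v,w} of distinct values in X_t, P_v(a) = Pr(z_t = v | z_S = a), g_v^j(a) = Pr_{z∼D}(f(z) = j | z_S = a, z_t = v), and summands for which P_v(a)·P_w(a) = 0 are taken to be 0. -/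

import Mathlib

open Finset

open Classical in
/-- Conditional probability `Pr(A | B) = Pr(A ∩ B) / Pr(B)` over a finite space,
with mass function `P`. -/
noncomputable def condPr {F : Type*} [Fintype F] (P : F → ℝ) (A B : F → Prop) : ℝ :=
  (∑ z, if A z ∧ B z then P z else 0) / (∑ z, if B z then P z else 0)

open Classical in
/-- The global sufficient value function
`v^g_suff(S) = Σ_{x : P x > 0} P x · Pr_{z∼D}(f z = f x | z_S = x_S)`. -/
noncomputable def vgSuff {n : ℕ} {X : Fin n → Type*} [∀ i, Fintype (X i)]
    {C : Type*} (f : (∀ i, X i) → C) (P : (∀ i, X i) → ℝ)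
    (S : Finset (Fin n)) : ℝ :=
  ∑ x ∈ Finset.univ.filter (fun x => 0 < P x),
    P x * condPr P (fun z => f z = f x) (fun z => ∀ i ∈ S, z i = x i)

open Classical in
/-- `Pr(z_S = a)`, the probability that the coordinates in `S` take the values
prescribed by the tuple `a : Π_{i ∈ S} X_i`. -/
noncomputable def prOn {n : ℕ} {X : Fin n → Type*} [∀ i, Fintype (X i)]
    (P : (∀ i, X i) → ℝ) (S : Finset (Fin n)) (a : ∀ i : S, X i) : ℝ :=
  ∑ z : ∀ i, X i, if (∀ i : S, z i = a i) then P z else 0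

namespace VgAux

lemma iteP {p q : Prop} {i1 : Decidable p} {i2 : Decidable q} (h : p ↔ q) (x : ℝ) :
    (@ite ℝ p i1 x 0) = (@ite ℝ q i2 x 0) := by
  by_cases hp : p
  · rw [if_pos hp, if_pos (h.mp hp)]
  · rw [if_neg hp, if_neg (fun hq => hp (h.mpr hq))]

lemma core0 {ι : Type*} [Fintype ι] (q g : ι → ℝ) :
    ∑ v, ∑ w, q v * q w * (g v - g w)^2
      = 2 * (∑ v, q v) * (∑ v, q v * g v ^ 2) - 2 * (∑ v, q v * g v)^2 := by
  have h : ∀ v w : ι, q v * q w * (g v - g w)^2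
      = q v * g v^2 * q w + q v * (q w * g w^2) - 2 * ((q v * g v) * (q w * g w)) := by
    intros; ring
  simp_rw [h, Finset.sum_sub_distrib, Finset.sum_add_distrib, ← Finset.mul_sum,
    ← Finset.sum_mul]
  ring

lemma core {ι : Type*} [Fintype ι] {dec : DecidableEq ι} (q g : ι → ℝ) (Q : ℝ) (hQ : Q ≠ 0)
    (hsum : ∑ v, q v = Q) :
    Q * ((∑ p ∈ (univ : Finset ι).offDiag,
        q p.1 / Q * (q p.2 / Q) * (g p.1 - g p.2) ^ 2) / 2)
      = (∑ v, q v * g v ^ 2) - (∑ v, q v * g v) ^ 2 / Q := by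
  have hoff : ∑ p ∈ (univ : Finset ι).offDiag,
        q p.1 / Q * (q p.2 / Q) * (g p.1 - g p.2) ^ 2
      = ∑ p ∈ univ ×ˢ univ, q p.1 / Q * (q p.2 / Q) * (g p.1 - g p.2) ^ 2 := by
    refine Finset.sum_subset ?_ ?_
    · intro p hp
      simp [Finset.mem_product]
    · intro p _ hnp
      have : p.1 = p.2 := by
        by_contra hne
        exact hnp (by simp [Finset.mem_offDiag, hne])
      simp [this]
  have hscale : ∀ p : ι × ι, q p.1 / Q * (q p.2 / Q) * (g p.1 - g p.2) ^ 2
      = (q p.1 * q p.2 * (g p.1 - g p.2) ^ 2) / Q ^ 2 := fun p => by ring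
  rw [hoff]
  simp_rw [hscale]
  rw [← Finset.sum_div, Finset.sum_product, core0 q g, hsum]
  field_simp

lemma fiber_sum {α β : Type*} [Fintype α] [Fintype β] [DecidableEq β]
    (r : α → β) (g : α → ℝ) (h : β → ℝ) :
    ∑ x, g x * h (r x) = ∑ b, (∑ x, if r x = b then g x else 0) * h b := by
  simp_rw [Finset.sum_mul, ite_mul, zero_mul]
  rw [Finset.sum_comm]
  refine Finset.sum_congr rfl fun x _ => ?_
  simp [Finset.sum_ite_eq]

variable {n : ℕ} {X : Fin n → Type*} [∀ i, Fintype (X i)] {C : Type*} [Fintype C]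

open Classical in
noncomputable def qV (P : (∀ i, X i) → ℝ) (S : Finset (Fin n)) (t : Fin n)
    (a : ∀ i : S, X i) (v : X t) : ℝ :=
  ∑ z : ∀ i, X i, if (∀ i : S, z i = a i) ∧ z t = v then P z else 0

open Classical in
noncomputable def mJ (f : (∀ i, X i) → C) (P : (∀ i, X i) → ℝ) (S : Finset (Fin n))
    (a : ∀ i : S, X i) (j : C) : ℝ :=
  ∑ z : ∀ i, X i, if f z = j ∧ (∀ i : S, z i = a i) then P z else 0

open Classical in
noncomputable def mV (f : (∀ i, X i) → C) (P : (∀ i, X i) → ℝ) (S : Finset (Fin n))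
    (t : Fin n) (a : ∀ i : S, X i) (v : X t) (j : C) : ℝ :=
  ∑ z : ∀ i, X i, if f z = j ∧ ((∀ i : S, z i = a i) ∧ z t = v) then P z else 0

lemma condPr_t (P : (∀ i, X i) → ℝ) (S : Finset (Fin n)) (t : Fin n)
    (a : ∀ i : S, X i) (v : X t) :
    condPr P (fun z => z t = v) (fun z => ∀ i : S, z i = a i)
      = qV P S t a v / prOn P S a := by
  rw [condPr, qV, prOn]
  congr 1
  · exact Finset.sum_congr rfl fun z _ => iteP and_comm _
  · exact Finset.sum_congr rfl fun z _ => iteP Iff.rfl _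

lemma condPr_fj (f : (∀ i, X i) → C) (P : (∀ i, X i) → ℝ) (S : Finset (Fin n))
    (t : Fin n) (a : ∀ i : S, X i) (v : X t) (j : C) :
    condPr P (fun z => f z = j) (fun z => (∀ i : S, z i = a i) ∧ z t = v)
      = mV f P S t a v j / qV P S t a v := by
  rw [condPr, mV, qV]
  congr 1
  · exact Finset.sum_congr rfl fun z _ => iteP Iff.rfl _
  · exact Finset.sum_congr rfl fun z _ => iteP Iff.rfl _

section Bounds
variable {F : Type*} [Fintype F] {P : F → ℝ}

lemma sumite_nonneg (hP0 : ∀ x, 0 ≤ P x) (A : F → Prop) {iA : ∀ z, Decidable (A z)} :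
    0 ≤ ∑ z, if A z then P z else 0 := by
  refine Finset.sum_nonneg fun z _ => ?_
  by_cases h : A z <;> simp [h, hP0 z]

lemma sumite_mono (hP0 : ∀ x, 0 ≤ P x) {A B : F → Prop}
    {iA : ∀ z, Decidable (A z)} {iB : ∀ z, Decidable (B z)} (h : ∀ z, A z → B z) :
    (∑ z, if A z then P z else 0) ≤ ∑ z, if B z then P z else 0 := by
  refine Finset.sum_le_sum fun z _ => ?_
  by_cases hA : A z
  · simp [hA, h z hA]
  · by_cases hB : B z <;> simp [hA, hB, hP0 z]

lemma condPr_nonneg (hP0 : ∀ x, 0 ≤ P x) (A B : F → Prop) :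
    0 ≤ condPr P A B := by
  rw [condPr]
  exact div_nonneg (sumite_nonneg hP0 _) (sumite_nonneg hP0 _)

end Bounds

variable {P : (∀ i, X i) → ℝ} {f : (∀ i, X i) → C} {S : Finset (Fin n)} {t : Fin n}

lemma prOn_nonneg (hP0 : ∀ x, 0 ≤ P x) (a : ∀ i : S, X i) : 0 ≤ prOn P S a := by
  rw [prOn]; exact sumite_nonneg hP0 _

lemma mV_nonneg (hP0 : ∀ x, 0 ≤ P x) (a : ∀ i : S, X i) (v : X t) (j : C) :
    0 ≤ mV f P S t a v j := by
  rw [mV]; exact sumite_nonneg hP0 _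

lemma mJ_nonneg (hP0 : ∀ x, 0 ≤ P x) (a : ∀ i : S, X i) (j : C) :
    0 ≤ mJ f P S a j := by
  rw [mJ]; exact sumite_nonneg hP0 _

lemma mV_le_qV (hP0 : ∀ x, 0 ≤ P x) (a : ∀ i : S, X i) (v : X t) (j : C) :
    mV f P S t a v j ≤ qV P S t a v := by
  rw [mV, qV]; exact sumite_mono hP0 fun z hz => hz.2

lemma mJ_le_prOn (hP0 : ∀ x, 0 ≤ P x) (a : ∀ i : S, X i) (j : C) :
    mJ f P S a j ≤ prOn P S a := by
  rw [mJ, prOn]; exact sumite_mono hP0 fun z hz => hz.2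

lemma qV_le_prOn (hP0 : ∀ x, 0 ≤ P x) (a : ∀ i : S, X i) (v : X t) :
    qV P S t a v ≤ prOn P S a := by
  rw [qV, prOn]; exact sumite_mono hP0 fun z hz => hz.1

lemma sum_qV (a : ∀ i : S, X i) : ∑ v : X t, qV P S t a v = prOn P S a := by
  classical
  rw [prOn]
  simp_rw [qV]
  rw [Finset.sum_comm]
  refine Finset.sum_congr rfl fun z _ => ?_
  simp only [ite_and]
  by_cases hC : ∀ i : S, z i = a i
  · simp only [if_pos hC]
    simp [Finset.sum_ite_eq]
  · simp [hC]

lemma sum_mV (a : ∀ i : S, X i) (j : C) :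
    ∑ v : X t, mV f P S t a v j = mJ f P S a j := by
  classical
  rw [mJ]
  simp_rw [mV]
  rw [Finset.sum_comm]
  refine Finset.sum_congr rfl fun z _ => ?_
  simp only [ite_and]
  by_cases hj : f z = j
  · simp only [if_pos hj]
    by_cases hC : ∀ i : S, z i = a i
    · simp only [if_pos hC]
      simp [Finset.sum_ite_eq]
    · simp [hC]
  · simp [hj]


lemma vgSuff_eq (hP0 : ∀ x, 0 ≤ P x) :
    vgSuff f P S = ∑ a : ∀ i : S, X i, ∑ j : C,
      mJ f P S a j * (mJ f P S a j / prOn P S a) := by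
  classical
  have h1 : vgSuff f P S
      = ∑ x : ∀ i, X i, P x *
          (mJ f P S (fun i : S => x i) (f x) / prOn P S (fun i : S => x i)) := by
    rw [vgSuff]
    rw [Finset.sum_subset (Finset.filter_subset _ _)
      (fun x _ hx => by
        have hx0 : P x = 0 := le_antisymm (not_lt.mp (by simpa using hx)) (hP0 x)
        simp [hx0])]
    refine Finset.sum_congr rfl fun x _ => ?_
    congr 1
    rw [condPr, mJ, prOn]
    congr 1
    · exact Finset.sum_congr rfl fun z _ => iteP (by simp [Subtype.forall]) _
    · exact Finset.sum_congr rfl fun z _ => iteP (by simp [Subtype.forall]) _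
  rw [h1, fiber_sum (fun x => ((fun i : S => x i), f x)) P
      (fun b => mJ f P S b.1 b.2 / prOn P S b.1)]
  rw [Fintype.sum_prod_type]
  refine Finset.sum_congr rfl fun a _ => Finset.sum_congr rfl fun j _ => ?_
  congr 1
  rw [mJ]
  refine Finset.sum_congr rfl fun x _ => iteP ?_ _
  simp [Prod.ext_iff, funext_iff, Subtype.forall]
  tauto

lemma vgSuff_insert_eq (hP0 : ∀ x, 0 ≤ P x) :
    vgSuff f P (insert t S) = ∑ a : ∀ i : S, X i, ∑ v : X t, ∑ j : C,
      mV f P S t a v j * (mV f P S t a v j / qV P S t a v) := by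
  classical
  have h1 : vgSuff f P (insert t S)
      = ∑ x : ∀ i, X i, P x *
          (mV f P S t (fun i : S => x i) (x t) (f x)
            / qV P S t (fun i : S => x i) (x t)) := by
    rw [vgSuff]
    rw [Finset.sum_subset (Finset.filter_subset _ _)
      (fun x _ hx => by
        have hx0 : P x = 0 := le_antisymm (not_lt.mp (by simpa using hx)) (hP0 x)
        simp [hx0])]
    refine Finset.sum_congr rfl fun x _ => ?_
    congr 1
    rw [condPr, mV, qV]
    congr 1
    · refine Finset.sum_congr rfl fun z _ => iteP ?_ _
      simp [Finset.forall_mem_insert, Subtype.forall]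
      tauto
    · refine Finset.sum_congr rfl fun z _ => iteP ?_ _
      simp [Finset.forall_mem_insert, Subtype.forall]
      tauto
  rw [h1, fiber_sum (fun x => ((fun i : S => x i), x t, f x)) P
      (fun b => mV f P S t b.1 b.2.1 b.2.2 / qV P S t b.1 b.2.1)]
  rw [Fintype.sum_prod_type]
  refine Finset.sum_congr rfl fun a _ => ?_
  rw [Fintype.sum_prod_type]
  refine Finset.sum_congr rfl fun v _ => Finset.sum_congr rfl fun j _ => ?_
  congr 1
  rw [mV]
  refine Finset.sum_congr rfl fun x _ => iteP ?_ _
  simp [Prod.ext_iff, funext_iff, Subtype.forall]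
  tauto


open Classical in
lemma per_aj (hP0 : ∀ x, 0 ≤ P x) (a : ∀ i : S, X i) (ha : 0 < prOn P S a) (j : C) :
    (∑ v : X t, mV f P S t a v j * (mV f P S t a v j / qV P S t a v))
      - mJ f P S a j * (mJ f P S a j / prOn P S a)
    = prOn P S a * ((∑ p ∈ (univ : Finset (X t)).offDiag,
        qV P S t a p.1 / prOn P S a * (qV P S t a p.2 / prOn P S a) *
        (mV f P S t a p.1 j / qV P S t a p.1
          - mV f P S t a p.2 j / qV P S t a p.2) ^ 2) / 2) := by
  classical
  refine Eq.trans ?_ (core (dec := Classical.decEq _) (fun v => qV P S t a v)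
    (fun v => mV f P S t a v j / qV P S t a v) (prOn P S a) ha.ne' (sum_qV a)).symm
  have hmv : ∀ v : X t, mV f P S t a v j
      = qV P S t a v * (mV f P S t a v j / qV P S t a v) := by
    intro v
    by_cases hq : qV P S t a v = 0
    · have h0 : mV f P S t a v j = 0 :=
        le_antisymm (hq ▸ mV_le_qV hP0 a v j) (mV_nonneg hP0 a v j)
      simp [h0, hq]
    · field_simp
  have h2 : ∑ v : X t, mV f P S t a v j * (mV f P S t a v j / qV P S t a v)
      = ∑ v : X t, qV P S t a v * (mV f P S t a v j / qV P S t a v) ^ 2 := by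
    refine Finset.sum_congr rfl fun v _ => ?_
    calc mV f P S t a v j * (mV f P S t a v j / qV P S t a v)
        = (qV P S t a v * (mV f P S t a v j / qV P S t a v))
            * (mV f P S t a v j / qV P S t a v) := by rw [← hmv v]
      _ = qV P S t a v * (mV f P S t a v j / qV P S t a v) ^ 2 := by ring
  have h3 : mJ f P S a j
      = ∑ v : X t, qV P S t a v * (mV f P S t a v j / qV P S t a v) := by
    rw [← sum_mV a j]
    exact Finset.sum_congr rfl fun v _ => hmv v
  rw [h2, h3]
  ring

end VgAux

open Classical in
/-- for a general classifier and a coordinate `t ∉ S`, the marginal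
gain of adding `t` is
`Σ_a Pr(z_S = a) · Σ_{j ∈ C} Σ_{{v,w}} P_v(a) P_w(a) (g_v^j(a) − g_w^j(a))² ≥ 0`,
where the inner sum runs over unordered pairs `{v,w}` of distinct values of `X_t`
(realized as half the sum over ordered pairs of distinct values),
`P_v(a) = Pr(z_t = v | z_S = a)` and `g_v^j(a) = Pr(f z = j | z_S = a, z_t = v)`. -/
theorem vgSuff_marginal_gain {n : ℕ} {X : Fin n → Type*}
    [∀ i, Fintype (X i)] [∀ i, Nonempty (X i)]
    {C : Type*} [Fintype C] [Nonempty C]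
    (f : (∀ i, X i) → C) (P : (∀ i, X i) → ℝ)
    (hP0 : ∀ x, 0 ≤ P x) (hP1 : ∑ x, P x = 1)
    (S : Finset (Fin n)) (t : Fin n) (ht : t ∉ S) :
    vgSuff f P (insert t S) - vgSuff f P S =
      (∑ a ∈ Finset.univ.filter (fun a : ∀ i : S, X i => 0 < prOn P S a),
        prOn P S a *
          ∑ j : C,
            (∑ p ∈ (Finset.univ : Finset (X t)).offDiag,
              condPr P (fun z => z t = p.1) (fun z => ∀ i : S, z i = a i)
                * condPr P (fun z => z t = p.2) (fun z => ∀ i : S, z i = a i)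
                * (condPr P (fun z => f z = j)
                      (fun z => (∀ i : S, z i = a i) ∧ z t = p.1)
                    - condPr P (fun z => f z = j)
                        (fun z => (∀ i : S, z i = a i) ∧ z t = p.2)) ^ 2) / 2) ∧
    0 ≤ vgSuff f P (insert t S) - vgSuff f P S := by
  classical
  have heq : vgSuff f P (insert t S) - vgSuff f P S =
      (∑ a ∈ Finset.univ.filter (fun a : ∀ i : S, X i => 0 < prOn P S a),
        prOn P S a *
          ∑ j : C,
            (∑ p ∈ (Finset.univ : Finset (X t)).offDiag,
              condPr P (fun z => z t = p.1) (fun z => ∀ i : S, z i = a i)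
                * condPr P (fun z => z t = p.2) (fun z => ∀ i : S, z i = a i)
                * (condPr P (fun z => f z = j)
                      (fun z => (∀ i : S, z i = a i) ∧ z t = p.1)
                    - condPr P (fun z => f z = j)
                        (fun z => (∀ i : S, z i = a i) ∧ z t = p.2)) ^ 2) / 2) := by
    rw [VgAux.vgSuff_insert_eq hP0, VgAux.vgSuff_eq hP0]
    rw [← Finset.sum_sub_distrib]
    simp only [VgAux.condPr_t, VgAux.condPr_fj]
    rw [Finset.sum_subset (Finset.filter_subset _ Finset.univ) (fun a _ ha => by
      have hQ : prOn P S a = 0 :=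
        le_antisymm (not_lt.mp (by simpa using ha)) (VgAux.prOn_nonneg hP0 a)
      simp [hQ])]
    refine Finset.sum_congr rfl fun a _ => ?_
    by_cases ha : 0 < prOn P S a
    · rw [Finset.sum_comm, ← Finset.sum_sub_distrib, Finset.mul_sum]
      exact Finset.sum_congr rfl fun j _ => VgAux.per_aj hP0 a ha j
    · have hQ : prOn P S a = 0 :=
        le_antisymm (not_lt.mp ha) (VgAux.prOn_nonneg hP0 a)
      have hmJ : ∀ j, VgAux.mJ f P S a j = 0 := fun j =>
        le_antisymm (hQ ▸ VgAux.mJ_le_prOn hP0 a j) (VgAux.mJ_nonneg hP0 a j)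
      have hmV : ∀ (v : X t) j, VgAux.mV f P S t a v j = 0 := fun v j =>
        le_antisymm (hQ ▸ (VgAux.mV_le_qV hP0 a v j).trans (VgAux.qV_le_prOn hP0 a v))
          (VgAux.mV_nonneg hP0 a v j)
      simp [hmJ, hmV, hQ]
  refine ⟨heq, ?_⟩
  rw [heq]
  refine Finset.sum_nonneg fun a _ => mul_nonneg (VgAux.prOn_nonneg hP0 a)
    (Finset.sum_nonneg fun j _ => div_nonneg
      (Finset.sum_nonneg fun p _ => mul_nonneg
        (mul_nonneg (VgAux.condPr_nonneg hP0 _ _) (VgAux.condPr_nonneg hP0 _ _))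
        (sq_nonneg _)) (by norm_num))
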